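/- For every natural number m, the alternating sum Σ_{i=0}^{⌊m/2⌋} (−1)^i · q^(i(i−1)/2) · [m−i choose i]_q, as a polynomial in ℤ[q], equals 0 if m ≡ 2 (mod 3), and equals (−1)^(⌊m/3⌋) · q^(m(m−1)/6) if m ≢ 2 (mod 3); in the latter case m(m−1)/6 is a nonnegative integer. -/
import Mathlib
open Polynomial Finset

namespace GaussAlt

noncomputable def P (k : ℕ) : Polynomial ℤ := ∏ i ∈ range k, (1 - (X : Polynomial ℤ) ^ (i + 1))
noncomputable def Q (m k : ℕ) : Polynomial ℤ := ∏ i ∈ range k, (1 - (X : Polynomial ℤ) ^ (m - i))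

lemma P_ne_zero (k : ℕ) : P k ≠ 0 := by
  unfold P
  rw [Finset.prod_ne_zero_iff]
  intro i _ h
  have h0 := congrArg (fun p => Polynomial.coeff p 0) h
  simp [Polynomial.coeff_X_pow] at h0

variable {G : ℕ → ℕ → Polynomial ℤ}
  (hG : ∀ m k : ℕ, k ≤ m → G m k * P k = Q m k)
  (hG0 : ∀ m k : ℕ, m < k → G m k = 0)

include hG in
lemma G_zero (a : ℕ) : G a 0 = 1 := by
  have h := hG a 0 (Nat.zero_le _)
  simpa [P, Q] using h

include hG in
lemma G_self (a : ℕ) : G a a = 1 := by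
  have h := hG a a le_rfl
  have hQ : Q a a = P a := by
    unfold P Q
    rw [← Finset.prod_range_reflect (fun j => 1 - (X : Polynomial ℤ) ^ (j+1)) a]
    apply Finset.prod_congr rfl
    intro i hi
    simp only [mem_range] at hi
    congr 2
    omega
  rw [hQ] at h
  have := mul_right_cancel₀ (P_ne_zero a) (h.trans (one_mul (P a)).symm)
  exact this

lemma Qsucc' (a k : ℕ) : Q (a+1) (k+1) = Q a k * (1 - (X:Polynomial ℤ)^(a+1)) := by
  unfold Q
  rw [Finset.prod_range_succ']
  congr 1
  apply Finset.prod_congr rfl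
  intro i _
  congr 2
  omega

lemma Qsucc (a k : ℕ) : Q a (k+1) = Q a k * (1 - (X:Polynomial ℤ)^(a-k)) := by
  unfold Q
  rw [Finset.prod_range_succ]

lemma Psucc (k : ℕ) : P (k+1) = P k * (1 - (X:Polynomial ℤ)^(k+1)) := by
  unfold P
  rw [Finset.prod_range_succ]

include hG hG0 in
lemma pascal1 (a k : ℕ) :
    G (a+1) (k+1) = G a (k+1) + (X:Polynomial ℤ)^(a-k) * G a k := by
  rcases lt_trichotomy k a with h | h | h
  · apply mul_right_cancel₀ (P_ne_zero (k+1))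
    rw [hG (a+1) (k+1) (by omega), add_mul, hG a (k+1) (by omega),
        Psucc, Qsucc' , Qsucc, ← mul_assoc, mul_comm ((X:Polynomial ℤ)^(a-k)) (G a k),
        mul_assoc (G a k), mul_comm ((X:Polynomial ℤ)^(a-k)) (P k), ← mul_assoc (G a k),
        hG a k (by omega)]
    have hx : (X:Polynomial ℤ)^(a-k) * (X:Polynomial ℤ)^(k+1) = (X:Polynomial ℤ)^(a+1) := by
      rw [← pow_add]; congr 1; omega
    ring_nf
    ring_nf at hx
    linear_combination (Q a k) * hx
  · subst h
    rw [G_self hG, G_self hG, hG0 k (k+1) (by omega), Nat.sub_self]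
    ring
  · rw [hG0 (a+1) (k+1) (by omega), hG0 a (k+1) (by omega), hG0 a k (by omega)]
    ring

include hG hG0 in
lemma pascal2 (a k : ℕ) :
    G (a+1) (k+1) = (X:Polynomial ℤ)^(k+1) * G a (k+1) + G a k := by
  rcases lt_trichotomy k a with h | h | h
  · apply mul_right_cancel₀ (P_ne_zero (k+1))
    rw [hG (a+1) (k+1) (by omega), add_mul, mul_assoc, hG a (k+1) (by omega),
        Psucc, Qsucc', Qsucc, ← mul_assoc (G a k), hG a k (by omega)]
    have hx : (k+1) + (a-k) = a + 1 := by omega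
    calc Q a k * (1 - (X:Polynomial ℤ)^(a+1))
        = Q a k * (1 - (X:Polynomial ℤ)^((k+1)+(a-k))) := by rw [hx]
      _ = (X:Polynomial ℤ)^(k+1) * (Q a k * (1 - (X:Polynomial ℤ)^(a-k))) + Q a k * (1 - (X:Polynomial ℤ)^(k+1)) := by
          rw [pow_add]; ring
  · subst h
    rw [G_self hG, G_self hG, hG0 k (k+1) (by omega)]
    ring
  · rw [hG0 (a+1) (k+1) (by omega), hG0 a (k+1) (by omega), hG0 a k (by omega)]
    ring


noncomputable def S (G : ℕ → ℕ → Polynomial ℤ) (m : ℕ) : Polynomial ℤ :=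
  ∑ i ∈ range (m+1), (-1:Polynomial ℤ)^i * (X:Polynomial ℤ)^(i*(i-1)/2) * G (m-i) i

noncomputable def T (G : ℕ → ℕ → Polynomial ℤ) (m : ℕ) : Polynomial ℤ :=
  ∑ i ∈ range (m+1), (-1:Polynomial ℤ)^i * (X:Polynomial ℤ)^(i*(i+1)/2) * G (m-i) i

lemma exp1 (i : ℕ) : i*(i+1)/2 + (i+1) = (i+1)*(i+2)/2 := by
  obtain ⟨c, hc⟩ := Nat.even_mul_succ_self i
  have h2 : (i+1)*(i+2) = i*(i+1) + 2*(i+1) := by ring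
  omega

lemma exp2 (i : ℕ) : i*(i-1)/2 + i = i*(i+1)/2 := by
  cases i with
  | zero => rfl
  | succ j =>
    obtain ⟨c, hc⟩ := Nat.even_mul_succ_self j
    have h1 : (j+1)*((j+1)-1) = j*(j+1) := by simp [Nat.mul_comm]
    have h2 : (j+1)*(j+1+1) = j*(j+1) + 2*(j+1) := by ring
    omega

include hG in
lemma Tshift (m : ℕ) :
    T G (m+1) =
      (∑ i ∈ range (m+1), (-1:Polynomial ℤ)^(i+1) * (X:Polynomial ℤ)^((i+1)*(i+2)/2) * G (m-i) (i+1)) + 1 := by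
  unfold T
  rw [Finset.sum_range_succ']
  congr 1
  · apply Finset.sum_congr rfl
    intro i hi
    have h1 : m + 1 - (i+1) = m - i := by omega
    have h2 : (i+1)*((i+1)+1)/2 = (i+1)*(i+2)/2 := by norm_num
    rw [h1, h2]
  · simp [G_zero hG]

include hG hG0 in
lemma claimA (m : ℕ) : S G (m+2) = T G (m+1) - T G m := by
  have hterm : ∀ i ∈ range (m+2),
      (-1:Polynomial ℤ)^(i+1) * (X:Polynomial ℤ)^((i+1)*((i+1)-1)/2) * G (m+2-(i+1)) (i+1)
      = (-1:Polynomial ℤ)^(i+1) * (X:Polynomial ℤ)^((i+1)*(i+2)/2) * G (m-i) (i+1)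
        + (-((-1:Polynomial ℤ)^i * (X:Polynomial ℤ)^(i*(i+1)/2) * G (m-i) i)) := by
    intro i hi
    simp only [mem_range] at hi
    by_cases him : i ≤ m
    · have hs : m + 2 - (i+1) = (m - i) + 1 := by omega
      rw [hs, pascal2 hG hG0 (m-i) i]
      have he1 : (i+1)*((i+1)-1)/2 = i*(i+1)/2 := by simp [Nat.mul_comm]
      have he2 : (X:Polynomial ℤ)^((i+1)*(i+2)/2) = (X:Polynomial ℤ)^(i*(i+1)/2) * (X:Polynomial ℤ)^(i+1) := by
        rw [← pow_add, exp1]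
      rw [he1, he2]
      ring
    · have hieq : i = m + 1 := by omega
      subst hieq
      rw [show m + 2 - (m+1+1) = 0 by omega, show m - (m+1) = 0 by omega,
          hG0 0 (m+1+1) (by omega), hG0 0 (m+1) (by omega)]
      ring
  have hsplit : S G (m+2)
      = (∑ i ∈ range (m+2), ((-1:Polynomial ℤ)^(i+1) * (X:Polynomial ℤ)^((i+1)*(i+2)/2) * G (m-i) (i+1)
        + (-((-1:Polynomial ℤ)^i * (X:Polynomial ℤ)^(i*(i+1)/2) * G (m-i) i)))) + 1 := by
    unfold S
    rw [Finset.sum_range_succ']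
    congr 1
    · exact Finset.sum_congr rfl hterm
    · simp [G_zero hG]
  rw [hsplit, Finset.sum_add_distrib, Finset.sum_neg_distrib]
  have hg : ∑ i ∈ range (m+2), (-1:Polynomial ℤ)^(i+1) * (X:Polynomial ℤ)^((i+1)*(i+2)/2) * G (m-i) (i+1)
      = T G (m+1) - 1 := by
    rw [Finset.sum_range_succ, Tshift hG m,
        show m - (m+1) = 0 by omega, hG0 0 (m+1+1) (by omega)]
    ring
  have hh : ∑ i ∈ range (m+2), (-1:Polynomial ℤ)^i * (X:Polynomial ℤ)^(i*(i+1)/2) * G (m-i) i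
      = T G m := by
    unfold T
    rw [Finset.sum_range_succ, show m - (m+1) = 0 by omega, hG0 0 (m+1) (by omega)]
    simp
  rw [hg, hh]
  ring


include hG hG0 in
lemma claimB (m : ℕ) : T G (m+2) = T G (m+1) - (X:Polynomial ℤ)^(m+1) * S G m := by
  have hterm : ∀ i ∈ range (m+2),
      (-1:Polynomial ℤ)^(i+1) * (X:Polynomial ℤ)^((i+1)*((i+1)+1)/2) * G (m+2-(i+1)) (i+1)
      = (-1:Polynomial ℤ)^(i+1) * (X:Polynomial ℤ)^((i+1)*(i+2)/2) * G (m-i) (i+1)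
        + (-((X:Polynomial ℤ)^(m+1) * ((-1:Polynomial ℤ)^i * (X:Polynomial ℤ)^(i*(i-1)/2) * G (m-i) i))) := by
    intro i hi
    simp only [mem_range] at hi
    by_cases h2 : 2*i ≤ m
    · have hs : m + 2 - (i+1) = (m - i) + 1 := by omega
      rw [hs, pascal1 hG hG0 (m-i) i]
      have hnorm : (i+1)*((i+1)+1)/2 = (i+1)*(i+2)/2 := by norm_num
      have hmi : m - i - i = m - 2*i := by omega
      have hexp : (i+1)*(i+2)/2 + (m - 2*i) = (m+1) + i*(i-1)/2 := by
        have h1 := exp1 i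
        have h2 := exp2 i
        omega
      have hx : (X:Polynomial ℤ)^((i+1)*(i+2)/2) * (X:Polynomial ℤ)^(m-2*i)
          = (X:Polynomial ℤ)^(m+1) * (X:Polynomial ℤ)^(i*(i-1)/2) := by
        rw [← pow_add, ← pow_add, hexp]
      rw [hnorm, hmi]
      calc (-1:Polynomial ℤ)^(i+1) * (X:Polynomial ℤ)^((i+1)*(i+2)/2)
            * (G (m-i) (i+1) + (X:Polynomial ℤ)^(m-2*i) * G (m-i) i)
          = (-1:Polynomial ℤ)^(i+1) * (X:Polynomial ℤ)^((i+1)*(i+2)/2) * G (m-i) (i+1)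
            + (-1:Polynomial ℤ)^(i+1) * ((X:Polynomial ℤ)^((i+1)*(i+2)/2) * (X:Polynomial ℤ)^(m-2*i)) * G (m-i) i := by
              ring
        _ = _ := by rw [hx]; ring
    · rw [hG0 (m+2-(i+1)) (i+1) (by omega), hG0 (m-i) (i+1) (by omega),
          hG0 (m-i) i (by omega)]
      ring
  have hsplit : T G (m+2)
      = (∑ i ∈ range (m+2), ((-1:Polynomial ℤ)^(i+1) * (X:Polynomial ℤ)^((i+1)*(i+2)/2) * G (m-i) (i+1)
        + (-((X:Polynomial ℤ)^(m+1) * ((-1:Polynomial ℤ)^i * (X:Polynomial ℤ)^(i*(i-1)/2) * G (m-i) i))))) + 1 := by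
    unfold T
    rw [Finset.sum_range_succ']
    congr 1
    · exact Finset.sum_congr rfl hterm
    · simp [G_zero hG]
  rw [hsplit, Finset.sum_add_distrib, Finset.sum_neg_distrib, ← Finset.mul_sum]
  have hg : ∑ i ∈ range (m+2), (-1:Polynomial ℤ)^(i+1) * (X:Polynomial ℤ)^((i+1)*(i+2)/2) * G (m-i) (i+1)
      = T G (m+1) - 1 := by
    rw [Finset.sum_range_succ, Tshift hG m,
        show m - (m+1) = 0 by omega, hG0 0 (m+1+1) (by omega)]
    ring
  have hh : ∑ i ∈ range (m+2), (-1:Polynomial ℤ)^i * (X:Polynomial ℤ)^(i*(i-1)/2) * G (m-i) i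
      = S G m := by
    unfold S
    rw [Finset.sum_range_succ, show m - (m+1) = 0 by omega, hG0 0 (m+1) (by omega)]
    simp
  rw [hg, hh]
  ring

include hG hG0 in
lemma Srec (m : ℕ) : S G (m+3) = -((X:Polynomial ℤ)^(m+1) * S G m) := by
  have a : S G (m+3) = T G (m+2) - T G (m+1) := claimA hG hG0 (m+1)
  have b := claimB hG hG0 m
  rw [a, b]
  ring

include hG in
lemma S0 : S G 0 = 1 := by
  unfold S
  simp [G_zero hG]

include hG hG0 in
lemma S1 : S G 1 = 1 := by
  unfold S
  rw [Finset.sum_range_succ, Finset.sum_range_succ, Finset.sum_range_zero]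
  simp [G_zero hG, hG0 0 1 (by omega)]

include hG hG0 in
lemma S2 : S G 2 = 0 := by
  unfold S
  rw [Finset.sum_range_succ, Finset.sum_range_succ, Finset.sum_range_succ, Finset.sum_range_zero]
  simp [G_zero hG, G_self hG, hG0 0 2 (by omega)]

include hG hG0 in
lemma main : ∀ m : ℕ, (m % 3 = 2 → S G m = 0) ∧
    (m % 3 ≠ 2 → 6 ∣ m*(m-1) ∧
      S G m = (-1:Polynomial ℤ)^(m/3) * (X:Polynomial ℤ)^(m*(m-1)/6)) := by
  intro m
  induction m using Nat.strong_induction_on with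
  | _ m ih =>
    match m with
    | 0 =>
      refine ⟨by omega, fun _ => ⟨⟨0, rfl⟩, ?_⟩⟩
      simp [S0 hG]
    | 1 =>
      refine ⟨by omega, fun _ => ⟨⟨0, rfl⟩, ?_⟩⟩
      simp [S1 hG hG0]
    | 2 =>
      exact ⟨fun _ => S2 hG hG0, fun h => absurd rfl h⟩
    | (n+3) =>
      obtain ⟨ihz, ihp⟩ := ih n (by omega)
      have hrec := Srec hG hG0 n
      constructor
      · intro h23
        have hn : n % 3 = 2 := by omega
        rw [hrec, ihz hn]
        ring
      · intro h23
        have hn : n % 3 ≠ 2 := by omega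
        obtain ⟨⟨q, hq⟩, hval⟩ := ihp hn
        have hmul : (n+3)*((n+3)-1) = n*(n-1) + 6*(n+1) := by
          cases n with
          | zero => norm_num
          | succ k =>
            simp only [Nat.add_sub_cancel, Nat.succ_sub_one]
            ring
        refine ⟨⟨q + (n+1), by omega⟩, ?_⟩
        have hdiv3 : (n+3)/3 = n/3 + 1 := by omega
        have hdexp : (n+3)*((n+3)-1)/6 = n*(n-1)/6 + (n+1) := by omega
        rw [hrec, hval, hdiv3, hdexp, pow_add, pow_add]
        ring

end GaussAlt


theorem gauss_alternating_sum_eval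
    (G : ℕ → ℕ → Polynomial ℤ)
    (hG : ∀ m k : ℕ, k ≤ m →
      G m k * ∏ i ∈ Finset.range k, (1 - (X : Polynomial ℤ) ^ (i + 1)) =
        ∏ i ∈ Finset.range k, (1 - (X : Polynomial ℤ) ^ (m - i)))
    (hG0 : ∀ m k : ℕ, m < k → G m k = 0)
    (m : ℕ) :
    (m % 3 = 2 →
        ∑ i ∈ Finset.range (m / 2 + 1),
          (-1 : Polynomial ℤ) ^ i * (X : Polynomial ℤ) ^ (i * (i - 1) / 2) * G (m - i) i = 0) ∧
      (m % 3 ≠ 2 →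
        6 ∣ m * (m - 1) ∧
          ∑ i ∈ Finset.range (m / 2 + 1),
              (-1 : Polynomial ℤ) ^ i * (X : Polynomial ℤ) ^ (i * (i - 1) / 2) * G (m - i) i =
            (-1 : Polynomial ℤ) ^ (m / 3) * (X : Polynomial ℤ) ^ (m * (m - 1) / 6)) := by
  have hG' : ∀ a k : ℕ, k ≤ a → G a k * GaussAlt.P k = GaussAlt.Q a k := by
    intro a k h
    simpa [GaussAlt.P, GaussAlt.Q] using hG a k h
  have hsum : (∑ i ∈ Finset.range (m / 2 + 1),
      (-1 : Polynomial ℤ) ^ i * (X : Polynomial ℤ) ^ (i * (i - 1) / 2) * G (m - i) i)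
      = GaussAlt.S G m := by
    unfold GaussAlt.S
    apply Finset.sum_subset
    · apply Finset.range_subset_range.2
      omega
    · intro i hi hni
      simp only [Finset.mem_range] at hi hni
      rw [hG0 (m - i) i (by omega)]
      ring
  obtain ⟨h1, h2⟩ := GaussAlt.main hG' hG0 m
  exact ⟨fun h => by rw [hsum]; exact h1 h, fun h => by rw [hsum]; exact h2 h⟩
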